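/- Let m ≥ 4 be an even integer, let t ≥ 2 and k ≥ 1 be integers, and let n be an integer with (t−1)(m−1) ≤ n−1. Then the disjoint union F of t+k−1 copies of the complete graph K_{m−1} contains no cycle of length m, and its complement contains no B_n^{(k)}; consequently R(C_m, B_n^{(k)}) ≥ (t+k−1)(m−1) + 1. -/

import Mathlib

/-- `G` contains a cycle of length `m`. -/
def HasCycleLen {V : Type*} (G : SimpleGraph V) (m : ℕ) : Prop :=
  ∃ (v : V) (c : G.Walk v v), c.IsCycle ∧ c.length = m

/-- `G` contains the book `B_n^{(k)}`: a clique on `k` vertices together with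
`n` further vertices each adjacent to all of them. -/
def HasBook {V : Type*} (G : SimpleGraph V) (k n : ℕ) : Prop :=
  ∃ S T : Finset V, S.card = k ∧ T.card = n ∧ Disjoint S T ∧
    (∀ u ∈ S, ∀ v ∈ S, u ≠ v → G.Adj u v) ∧
    (∀ u ∈ S, ∀ v ∈ T, G.Adj u v)

/-- Every simple graph on `N` vertices contains `C_m` or its complement contains
`B_n^{(k)}`. The Ramsey number `R(C_m, B_n^{(k)})` is the least such `N`. -/
def RamseyProp (m k n N : ℕ) : Prop :=
  ∀ G : SimpleGraph (Fin N), HasCycleLen G m ∨ HasBook Gᶜ k n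

/-- The disjoint union of `a` copies of the complete graph `K_b`:
two vertices are adjacent iff they are distinct and lie in the same copy. -/
def cliquesUnion (a b : ℕ) : SimpleGraph (Fin a × Fin b) :=
  SimpleGraph.fromRel fun u v => u.1 = v.1

lemma cliquesUnion_adj {a b : ℕ} {u v : Fin a × Fin b} :
    (cliquesUnion a b).Adj u v ↔ u ≠ v ∧ u.1 = v.1 := by
  simp only [cliquesUnion, SimpleGraph.fromRel_adj]
  constructor
  · rintro ⟨h, h2 | h2⟩ <;> exact ⟨h, by omega⟩
  · rintro ⟨h, h2⟩; exact ⟨h, Or.inl h2⟩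

lemma walk_fst {a b : ℕ} {u w : Fin a × Fin b} (p : (cliquesUnion a b).Walk u w) :
    ∀ x ∈ p.support, x.1 = u.1 := by
  induction p with
  | nil => intro x hx; simp at hx; subst hx; rfl
  | cons h p ih =>
    intro x hx
    rw [SimpleGraph.Walk.support_cons, List.mem_cons] at hx
    rcases hx with rfl | hx
    · rfl
    · rw [ih x hx, (cliquesUnion_adj.mp h).2]

lemma noCycle (a b m : ℕ) (hm : 4 ≤ m) (hb : b = m - 1) :
    ¬ HasCycleLen (cliquesUnion a b) m := by
  rintro ⟨v, c, hc, hlen⟩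
  have hfst : ∀ x ∈ c.support.tail, x.1 = v.1 := fun x hx =>
    walk_fst c x (List.mem_of_mem_tail hx)
  have hnd : (c.support.tail.map Prod.snd).Nodup := by
    refine List.Nodup.map_on ?_ hc.support_nodup
    intro x hx y hy hxy
    exact Prod.ext (by rw [hfst x hx, hfst y hy]) hxy
  have hlen2 : (c.support.tail.map Prod.snd).length = m := by
    rw [List.length_map, List.length_tail, SimpleGraph.Walk.length_support, hlen]
    omega
  have := hnd.length_le_card
  rw [hlen2] at this
  simp [Fintype.card_fin, hb] at this
  omega

lemma compl_adj_fst {a b : ℕ} {u v : Fin a × Fin b}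
    (h : (cliquesUnion a b)ᶜ.Adj u v) : u.1 ≠ v.1 := by
  intro he
  exact h.2 (cliquesUnion_adj.mpr ⟨h.ne, he⟩)

lemma noBook (t k m n : ℕ) (ht : 2 ≤ t) (hk : 1 ≤ k)
    (hm : 4 ≤ m) (hn1 : (t - 1) * (m - 1) ≤ n - 1) :
    ¬ HasBook (cliquesUnion (t + k - 1) (m - 1))ᶜ k n := by
  rintro ⟨S, T, hS, hT, hdisj, hSS, hST⟩
  set A : Finset (Fin (t + k - 1)) := S.image Prod.fst with hA
  have hAcard : A.card = k := by
    rw [hA, Finset.card_image_of_injOn, hS]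
    intro x hx y hy hxy
    by_contra hne
    exact compl_adj_fst (hSS x hx y hy hne) hxy
  have hTsub : T ⊆ Aᶜ ×ˢ (Finset.univ : Finset (Fin (m - 1))) := by
    intro x hx
    rw [Finset.mem_product, Finset.mem_compl]
    refine ⟨?_, Finset.mem_univ _⟩
    intro hmem
    rw [hA, Finset.mem_image] at hmem
    obtain ⟨u, hu, hux⟩ := hmem
    exact compl_adj_fst (hST u hu x hx) hux
  have hcard := Finset.card_le_card hTsub
  rw [hT, Finset.card_product, Finset.card_compl, hAcard] at hcard
  simp only [Fintype.card_fin, Finset.card_univ] at hcard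
  have h3 : 1 * 3 ≤ (t - 1) * (m - 1) := Nat.mul_le_mul (by omega) (by omega)
  have : t + k - 1 - k = t - 1 := by omega
  rw [this] at hcard
  omega

theorem stmt4 (t k m n : ℕ) (ht : 2 ≤ t) (hk : 1 ≤ k) (hmEven : Even m)
    (hm : 4 ≤ m) (hn1 : (t - 1) * (m - 1) ≤ n - 1) :
    ¬ HasCycleLen (cliquesUnion (t + k - 1) (m - 1)) m ∧
    ¬ HasBook (cliquesUnion (t + k - 1) (m - 1))ᶜ k n ∧
    ∀ N : ℕ, RamseyProp m k n N → (t + k - 1) * (m - 1) + 1 ≤ N := by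
  refine ⟨noCycle _ _ m hm rfl, noBook t k m n ht hk hm hn1, ?_⟩
  intro N hR
  by_contra hlt
  push_neg at hlt
  have hle : Fintype.card (Fin N) ≤ Fintype.card (Fin (t + k - 1) × Fin (m - 1)) := by
    simp [Fintype.card_prod]
    omega
  obtain ⟨f⟩ := Function.Embedding.nonempty_of_card_le hle
  set G : SimpleGraph (Fin N) := (cliquesUnion (t + k - 1) (m - 1)).comap f with hG
  rcases hR G with ⟨v, c, hc, hlen⟩ | ⟨S, T, hS, hT, hdisj, hSS, hST⟩
  · refine noCycle _ _ m hm rfl ⟨f v, c.map (SimpleGraph.Hom.comap f _), ?_, ?_⟩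
    · exact hc.map f.injective
    · exact (SimpleGraph.Walk.length_map _ _).trans hlen
  · refine noBook t k m n ht hk hm hn1 ⟨S.map f, T.map f, ?_, ?_, ?_, ?_, ?_⟩
    · rw [Finset.card_map]; exact hS
    · rw [Finset.card_map]; exact hT
    · exact Finset.disjoint_map f |>.mpr hdisj
    · intro u hu v hv hne
      rw [Finset.mem_map] at hu hv
      obtain ⟨u', hu', rfl⟩ := hu
      obtain ⟨v', hv', rfl⟩ := hv
      have hne' : u' ≠ v' := fun h => hne (by rw [h])
      have := hSS u' hu' v' hv' hne'
      exact ⟨f.injective.ne hne', this.2⟩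
    · intro u hu v hv
      rw [Finset.mem_map] at hu hv
      obtain ⟨u', hu', rfl⟩ := hu
      obtain ⟨v', hv', rfl⟩ := hv
      have := hST u' hu' v' hv'
      exact ⟨f.injective.ne this.ne, this.2⟩
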